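/- (Lemma 3) Assume the bounds of Assumption 1 hold for all arguments in (M)^I (not only (M₂)^I) together with Assumption 2, and fix masses m_i > 0 with Σ_{i=1}^I m_i = 1. Define the truncated logit operator 𝔏̄_iμ = (2 − m_i^{-1}‖μ_i‖)_+ · 𝔏_iμ. Then there exists a constant l̄ > 0 such that for every i ∈ {1,…,I} and all {μ}, {ν} ∈ (M)^I, ‖𝔏̄_iμ − 𝔏̄_iν‖ ≤ l̄ · Σ_{j=1}^I ‖μ_j − ν_j‖. -/

import Mathlib

open MeasureTheory Real

noncomputable section

/-- The action space `Ω = [0,1]`. -/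
abbrev Ω : Type := Set.Icc (0:ℝ) 1

/-- Tsallis deformed exponential `exp_q`. -/
noncomputable def texp (q z : ℝ) : ℝ :=
  if q = 1 then Real.exp z else (max (1 + (1 - q) * z) 0) ^ ((1:ℝ) / (1 - q))

/-- Total variation norm of a finite signed Borel measure on `Ω`. -/
noncomputable def tv (μ : SignedMeasure Ω) : ℝ := (μ.totalVariation Set.univ).toReal

/-- The density `y ↦ ∫_Ω [ exp_q(η⁻¹ ΔU_i(y,w,{μ})) / ∫_Ω exp_q(η⁻¹ ΔU_i(z,w,{μ})) dz ]^q dw`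
of the logit measure `𝔏_i μ`. -/
noncomputable def logitDensity (I : ℕ) (q η : ℝ)
    (U : Fin I → Ω → (Fin I → SignedMeasure Ω) → ℝ)
    (i : Fin I) (μ : Fin I → SignedMeasure Ω) (y : Ω) : ℝ :=
  ∫ w : Ω, (texp q (η⁻¹ * (U i y μ - U i w μ)) /
      ∫ z : Ω, texp q (η⁻¹ * (U i z μ - U i w μ))) ^ q

/-- The logit measure `𝔏_i μ`, as a signed measure on `Ω`. -/
noncomputable def Logit (I : ℕ) (q η : ℝ)
    (U : Fin I → Ω → (Fin I → SignedMeasure Ω) → ℝ)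
    (i : Fin I) (μ : Fin I → SignedMeasure Ω) : SignedMeasure Ω :=
  (volume : Measure Ω).withDensityᵥ (logitDensity I q η U i μ)

/-- The outflow rate `θ_i(q,η)` (evaluated at `{μ}`). -/
noncomputable def θfun (I : ℕ) (q η : ℝ)
    (U : Fin I → Ω → (Fin I → SignedMeasure Ω) → ℝ)
    (i : Fin I) (μ : Fin I → SignedMeasure Ω) : ℝ :=
  ∫ y : Ω, ∫ w : Ω, (texp q (η⁻¹ * (U i w μ - U i y μ)) /
      ∫ z : Ω, texp q (η⁻¹ * (U i z μ - U i y μ))) ^ q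

/-- The truncated logit operator `𝔏̄_i μ = (2 − m_i⁻¹‖μ_i‖)_+ · 𝔏_i μ`. -/
noncomputable def LogitTrunc (I : ℕ) (q η : ℝ) (m : Fin I → ℝ)
    (U : Fin I → Ω → (Fin I → SignedMeasure Ω) → ℝ)
    (i : Fin I) (μ : Fin I → SignedMeasure Ω) : SignedMeasure Ω :=
  (max (2 - (m i)⁻¹ * tv (μ i)) 0) • Logit I q η U i μ

/-! ### Auxiliary material for the proof -/

section Aux

open Set

/-- Any continuous real function on `Ω` is integrable. -/
lemma contInt {f : Ω → ℝ} (hf : Continuous f) : Integrable f volume :=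
  hf.integrable_of_hasCompactSupport ((isClosed_tsupport f).isCompact)

lemma abs_int_le {f : Ω → ℝ} {c : ℝ} (hf : Continuous f) (h : ∀ x, |f x| ≤ c) :
    |∫ x : Ω, f x| ≤ c := by
  calc |∫ x : Ω, f x| ≤ ∫ x : Ω, |f x| := by
        simpa [Real.norm_eq_abs] using
          norm_integral_le_integral_norm (μ := (volume : Measure Ω)) f
    _ ≤ ∫ _x : Ω, c := integral_mono (contInt hf).abs (integrable_const c) h
    _ = c := by simp

lemma le_int {f : Ω → ℝ} {c : ℝ} (hf : Continuous f) (h : ∀ x, c ≤ f x) :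
    c ≤ ∫ x : Ω, f x := by
  have := integral_mono (μ := (volume : Measure Ω)) (integrable_const c) (contInt hf) h
  simpa using this

/-! ### Total variation lemmas -/

lemma tv_nonneg (s : SignedMeasure Ω) : 0 ≤ tv s := ENNReal.toReal_nonneg

lemma tv_exists (s : SignedMeasure Ω) :
    ∃ i : Set Ω, MeasurableSet i ∧ tv s = s i - s iᶜ := by
  obtain ⟨i, hi₁, hi₂, hi₃, hpos, hneg⟩ := s.toJordanDecomposition_spec
  refine ⟨i, hi₁, ?_⟩
  rw [tv, SignedMeasure.totalVariation, Measure.add_apply, hpos, hneg,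
    SignedMeasure.toMeasureOfZeroLE_apply _ hi₂ hi₁ MeasurableSet.univ,
    SignedMeasure.toMeasureOfLEZero_apply _ hi₃ hi₁.compl MeasurableSet.univ]
  simp [Set.inter_univ, ← ENNReal.coe_add, sub_eq_add_neg]

lemma apply_repr (s : SignedMeasure Ω) {k : Set Ω} (hk : MeasurableSet k) :
    s k = (s.toJordanDecomposition.posPart k).toReal
        - (s.toJordanDecomposition.negPart k).toReal := by
  conv_lhs => rw [← s.toSignedMeasure_toJordanDecomposition]
  rw [MeasureTheory.JordanDecomposition.toSignedMeasure,
    Measure.toSignedMeasure_sub_apply hk]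
  rfl

lemma apply_sub_compl_le_tv (s : SignedMeasure Ω) {j : Set Ω} (hj : MeasurableSet j) :
    s j - s jᶜ ≤ tv s := by
  have h1 := apply_repr s hj
  have h2 := apply_repr s hj.compl
  have hpu : (s.toJordanDecomposition.posPart j).toReal
      ≤ (s.toJordanDecomposition.posPart Set.univ).toReal :=
    ENNReal.toReal_mono (measure_ne_top _ _) (measure_mono (Set.subset_univ _))
  have hnu : (s.toJordanDecomposition.negPart jᶜ).toReal
      ≤ (s.toJordanDecomposition.negPart Set.univ).toReal :=
    ENNReal.toReal_mono (measure_ne_top _ _) (measure_mono (Set.subset_univ _))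
  have htv : tv s = (s.toJordanDecomposition.posPart Set.univ).toReal
      + (s.toJordanDecomposition.negPart Set.univ).toReal := by
    rw [tv, SignedMeasure.totalVariation, Measure.add_apply,
      ENNReal.toReal_add (measure_ne_top _ _) (measure_ne_top _ _)]
  have hp2 : (0:ℝ) ≤ (s.toJordanDecomposition.negPart j).toReal := ENNReal.toReal_nonneg
  have hp3 : (0:ℝ) ≤ (s.toJordanDecomposition.posPart jᶜ).toReal := ENNReal.toReal_nonneg
  rw [h1, h2, htv]
  linarith

lemma tv_add_le (a b : SignedMeasure Ω) : tv (a + b) ≤ tv a + tv b := by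
  obtain ⟨i, hi, hieq⟩ := tv_exists (a + b)
  rw [hieq]
  have : (a + b) i - (a + b) iᶜ = (a i - a iᶜ) + (b i - b iᶜ) := by
    simp only [MeasureTheory.VectorMeasure.add_apply]; ring
  rw [this]
  exact add_le_add (apply_sub_compl_le_tv a hi) (apply_sub_compl_le_tv b hi)

lemma tv_neg (s : SignedMeasure Ω) : tv (-s) = tv s := by
  rw [tv, tv, SignedMeasure.totalVariation_neg]

lemma abs_tv_sub_tv_le (μ ν : SignedMeasure Ω) : |tv μ - tv ν| ≤ tv (μ - ν) := by
  rw [abs_le]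
  constructor
  · have : tv ν ≤ tv (ν - μ) + tv μ := by
      have := tv_add_le (ν - μ) μ
      simpa [sub_add_cancel] using this
    have hneg : tv (ν - μ) = tv (μ - ν) := by
      rw [show ν - μ = -(μ - ν) by abel, tv_neg]
    linarith [hneg ▸ this]
  · have : tv μ ≤ tv (μ - ν) + tv ν := by
      have := tv_add_le (μ - ν) ν
      simpa [sub_add_cancel] using this
    linarith

lemma tv_withDensityᵥ_le {f : Ω → ℝ} (hf : Integrable f volume) :
    tv ((volume : Measure Ω).withDensityᵥ f) ≤ ∫ x : Ω, |f x| := by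
  obtain ⟨i, hi, hieq⟩ := tv_exists ((volume : Measure Ω).withDensityᵥ f)
  rw [hieq, withDensityᵥ_apply hf hi, withDensityᵥ_apply hf hi.compl]
  have h1 : ∫ x in i, f x ≤ ∫ x in i, |f x| :=
    integral_mono (hf.restrict) (hf.abs.restrict) (fun x => le_abs_self _)
  have h2 : -∫ x in iᶜ, f x ≤ ∫ x in iᶜ, |f x| := by
    have := integral_mono ((hf.neg).restrict (s := iᶜ)) (hf.abs.restrict)
      (fun x => neg_le_abs (f x))
    simpa [integral_neg] using this
  have h3 : (∫ x in i, |f x|) + ∫ x in iᶜ, |f x| = ∫ x : Ω, |f x| :=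
    integral_add_compl hi hf.abs
  linarith

/-! ### rpow lemmas -/

lemma rpow_between {a b x e : ℝ} (ha : 0 < a) (hax : a ≤ x) (hxb : x ≤ b) :
    min (a ^ e) (b ^ e) ≤ x ^ e ∧ x ^ e ≤ max (a ^ e) (b ^ e) := by
  rcases le_or_gt 0 e with he | he
  · exact ⟨min_le_of_left_le (Real.rpow_le_rpow ha.le hax he),
      le_max_of_le_right (Real.rpow_le_rpow (ha.trans_le hax).le hxb he)⟩
  · exact ⟨min_le_of_right_le (Real.rpow_le_rpow_of_nonpos (ha.trans_le hax) hxb he.le),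
      le_max_of_le_left (Real.rpow_le_rpow_of_nonpos ha hax he.le)⟩

/-- Mean value inequality on a closed interval, in terms of `|·|`. -/
lemma lip_on_Icc {f f' : ℝ → ℝ} {a b K : ℝ}
    (hd : ∀ x ∈ Set.Icc a b, HasDerivWithinAt f (f' x) (Set.Icc a b) x)
    (hK : ∀ x ∈ Set.Icc a b, |f' x| ≤ K) {x y : ℝ}
    (hx : x ∈ Set.Icc a b) (hy : y ∈ Set.Icc a b) :
    |f x - f y| ≤ K * |x - y| := by
  have := (convex_Icc a b).norm_image_sub_le_of_norm_hasDerivWithin_le hd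
    (fun z hz => by simpa [Real.norm_eq_abs] using hK z hz) hy hx
  simpa [Real.norm_eq_abs] using this

/-- `x ↦ x ^ e` is Lipschitz on any interval `[a, b]` with `a > 0`. -/
lemma rpow_lip {a b : ℝ} (ha : 0 < a) (e : ℝ) :
    ∃ K, 0 ≤ K ∧ ∀ x ∈ Set.Icc a b, ∀ y ∈ Set.Icc a b, |x ^ e - y ^ e| ≤ K * |x - y| := by
  refine ⟨|e| * max (a ^ (e - 1)) (b ^ (e - 1)), by positivity, fun x hx y hy => ?_⟩
  refine lip_on_Icc (f := fun x => x ^ e) (f' := fun x => e * x ^ (e - 1)) (fun z hz => ?_) (fun z hz => ?_) hx hy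
  · exact (Real.hasDerivAt_rpow_const (Or.inl (ha.trans_le hz.1).ne')).hasDerivWithinAt
  · rw [abs_mul, abs_of_nonneg (Real.rpow_nonneg (ha.trans_le hz.1).le _)]
    exact mul_le_mul_of_nonneg_left (rpow_between ha hz.1 hz.2).2 (abs_nonneg e)

/-! ### Properties of `texp` -/

/-- The package of quantitative properties of `texp q` on `[-B, B]`, `B = η⁻¹ (2L)`. -/
lemma texp_package {q η L : ℝ} (hq : 0 < q) (hη : 0 < η) (hL : 0 < L)
    (hA2 : q ≠ 1 → ∃ g > 0, 1 - 2 * |1 - q| * η⁻¹ * L ≥ g) :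
    ∃ c₁ c₂ K : ℝ, 0 < c₁ ∧ c₁ ≤ c₂ ∧ 0 ≤ K ∧
      (∀ z, |z| ≤ η⁻¹ * (2 * L) → c₁ ≤ texp q z ∧ texp q z ≤ c₂) ∧
      (∀ z z', |z| ≤ η⁻¹ * (2 * L) → |z'| ≤ η⁻¹ * (2 * L) →
        |texp q z - texp q z'| ≤ K * |z - z'|) ∧
      ContinuousOn (texp q) (Set.Icc (-(η⁻¹ * (2 * L))) (η⁻¹ * (2 * L))) := by
  set B := η⁻¹ * (2 * L) with hB
  have hBpos : 0 < B := by positivity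
  by_cases hq1 : q = 1
  · subst hq1
    have htexp : texp 1 = Real.exp := by funext z; simp [texp]
    refine ⟨Real.exp (-B), Real.exp B, Real.exp B, Real.exp_pos _,
      Real.exp_le_exp.mpr (by linarith), (Real.exp_pos _).le, ?_, ?_, ?_⟩
    · intro z hz
      rw [htexp]
      rcases abs_le.mp hz with ⟨h1, h2⟩
      exact ⟨Real.exp_le_exp.mpr h1, Real.exp_le_exp.mpr h2⟩
    · intro z z' hz hz'
      rw [htexp]
      refine lip_on_Icc (f' := Real.exp) (fun x _ => (Real.hasDerivAt_exp x).hasDerivWithinAt)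
        (fun x hx => ?_) (abs_le.mp hz) (abs_le.mp hz')
      rw [abs_of_pos (Real.exp_pos x)]
      exact Real.exp_le_exp.mpr hx.2
    · rw [htexp]; exact Real.continuous_exp.continuousOn
  · obtain ⟨g, hg, hgle⟩ := hA2 hq1
    have he : (1 : ℝ) - q ≠ 0 := sub_ne_zero.mpr (Ne.symm hq1)
    set p := (1 : ℝ) / (1 - q) with hp
    set Mb := 1 + |1 - q| * B with hMb
    have hMbpos : (0:ℝ) < Mb := by positivity
    have hbase : ∀ z : ℝ, |z| ≤ B → g ≤ 1 + (1 - q) * z ∧ 1 + (1 - q) * z ≤ Mb := by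
      intro z hz
      have h1 : |(1 - q) * z| ≤ |1 - q| * B := by
        rw [abs_mul]
        exact mul_le_mul_of_nonneg_left hz (abs_nonneg _)
      have h2 : |1 - q| * B = 2 * |1 - q| * η⁻¹ * L := by rw [hB]; ring
      rcases abs_le.mp h1 with ⟨hl, hr⟩
      constructor
      · nlinarith [hgle]
      · rw [hMb]; linarith
    have htexp_eq : ∀ z : ℝ, |z| ≤ B → texp q z = (1 + (1 - q) * z) ^ p := by
      intro z hz
      rw [texp, if_neg hq1, max_eq_left (le_trans hg.le (hbase z hz).1)]
    refine ⟨min (g ^ p) (Mb ^ p), max (g ^ p) (Mb ^ p),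
      max (g ^ (p - 1)) (Mb ^ (p - 1)),
      lt_min (Real.rpow_pos_of_pos hg _) (Real.rpow_pos_of_pos hMbpos _),
      min_le_max,
      le_max_of_le_left (Real.rpow_nonneg hg.le _), ?_, ?_, ?_⟩
    · intro z hz
      rw [htexp_eq z hz]
      exact rpow_between hg (hbase z hz).1 (hbase z hz).2
    · intro z z' hz hz'
      have hderiv : ∀ x ∈ Set.Icc (-B) B,
          HasDerivWithinAt (texp q) ((1 + (1 - q) * x) ^ (p - 1)) (Set.Icc (-B) B) x := by
        intro x hx
        have hxB : |x| ≤ B := abs_le.mpr hx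
        have hbpos : 0 < 1 + (1 - q) * x := hg.trans_le (hbase x hxB).1
        have ha : HasDerivAt (fun z : ℝ => 1 + (1 - q) * z) (1 - q) x := by
          simpa using ((hasDerivAt_id x).const_mul (1 - q)).const_add 1
        have hr : HasDerivAt (fun y : ℝ => y ^ p) (p * (1 + (1 - q) * x) ^ (p - 1))
            (1 + (1 - q) * x) := Real.hasDerivAt_rpow_const (Or.inl hbpos.ne')
        have hcomp := hr.comp x ha
        have hval : p * (1 + (1 - q) * x) ^ (p - 1) * (1 - q)
            = (1 + (1 - q) * x) ^ (p - 1) := by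
          rw [hp]; field_simp
        rw [hval] at hcomp
        refine (hcomp.hasDerivWithinAt).congr (fun y hy => ?_) ?_
        · exact htexp_eq y (abs_le.mpr hy)
        · exact htexp_eq x hxB
      refine lip_on_Icc hderiv (fun x hx => ?_) (abs_le.mp hz) (abs_le.mp hz')
      have hxB : |x| ≤ B := abs_le.mpr hx
      rw [abs_of_nonneg (Real.rpow_nonneg (hg.trans_le (hbase x hxB).1).le _)]
      exact (rpow_between hg (hbase x hxB).1 (hbase x hxB).2).2
    · intro z hz
      have hzB : |z| ≤ B := abs_le.mpr hz
      have hbpos : 0 < 1 + (1 - q) * z := hg.trans_le (hbase z hzB).1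
      have hmaxpos : max (1 + (1 - q) * z) 0 ≠ 0 := by
        rw [max_eq_left hbpos.le]; exact hbpos.ne'
      have hca : ContinuousAt (fun z : ℝ => (max (1 + (1 - q) * z) 0) ^ p) z := by
        refine ContinuousAt.rpow_const ?_ (Or.inl hmaxpos)
        exact ((continuous_const.add (continuous_const.mul continuous_id)).max
          continuous_const).continuousAt
      have : ContinuousAt (texp q) z := by
        have : texp q = fun z : ℝ => (max (1 + (1 - q) * z) 0) ^ p := by
          funext w; rw [texp, if_neg hq1]
        rw [this]; exact hca
      exact this.continuousWithinAt

/-! ### The abstract density -/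

/-- Denominator `∫_Ω exp_q(η⁻¹ (V z − V w)) dz`. -/
noncomputable def denV (q η : ℝ) (V : Ω → ℝ) (w : Ω) : ℝ :=
  ∫ z : Ω, texp q (η⁻¹ * (V z - V w))

/-- The logit density associated with the payoff function `V`. -/
noncomputable def densV (q η : ℝ) (V : Ω → ℝ) (y : Ω) : ℝ :=
  ∫ w : Ω, (texp q (η⁻¹ * (V y - V w)) / denV q η V w) ^ q

lemma logitDensity_eq_densV (I : ℕ) (q η : ℝ)
    (U : Fin I → Ω → (Fin I → SignedMeasure Ω) → ℝ)
    (i : Fin I) (μ : Fin I → SignedMeasure Ω) :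
    logitDensity I q η U i μ = densV q η (fun x => U i x μ) := rfl

/-- A Hölder-continuous function on `Ω` is continuous. -/
lemma holder_cont {V : Ω → ℝ} {L d : ℝ} (hL : 0 < L) (hd : 0 < d) (hd1 : d ≤ 1)
    (h : ∀ x y : Ω, |V x - V y| ≤ L * |(x : ℝ) - (y : ℝ)| ^ d) : Continuous V := by
  rw [Metric.continuous_iff]
  intro x ε hε
  refine ⟨(ε / (L + 1)) ^ (1 / d), Real.rpow_pos_of_pos (by positivity) _, fun y hy => ?_⟩
  have hdist : dist y x = |(y : ℝ) - (x : ℝ)| := by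
    rw [Subtype.dist_eq, Real.dist_eq]
  rw [hdist] at hy
  have h1 : |(y : ℝ) - (x : ℝ)| ^ d ≤ ((ε / (L + 1)) ^ (1 / d)) ^ d :=
    Real.rpow_le_rpow (abs_nonneg _) hy.le hd.le
  have h2 : ((ε / (L + 1)) ^ (1 / d)) ^ d = ε / (L + 1) := by
    rw [← Real.rpow_mul (by positivity : (0:ℝ) ≤ ε / (L + 1)), one_div,
      inv_mul_cancel₀ hd.ne', Real.rpow_one]
  have h3 : dist (V y) (V x) ≤ L * (ε / (L + 1)) := by
    rw [Real.dist_eq]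
    calc |V y - V x| ≤ L * |(y : ℝ) - (x : ℝ)| ^ d := h y x
      _ ≤ L * (ε / (L + 1)) := by
          rw [← h2]; exact mul_le_mul_of_nonneg_left h1 hL.le
  calc dist (V y) (V x) ≤ L * (ε / (L + 1)) := h3
    _ < ε := by
        rw [mul_div_assoc']
        rw [div_lt_iff₀ (by positivity)]
        nlinarith

/-- Properties of the denominator `denV`. -/
lemma den_package {q η B c₁ c₂ : ℝ} (hc₁ : 0 < c₁)
    (hmem : ∀ z, |z| ≤ B → c₁ ≤ texp q z ∧ texp q z ≤ c₂)
    (hcont : ContinuousOn (texp q) (Set.Icc (-B) B))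
    {V : Ω → ℝ} (hV : Continuous V) (hVB : ∀ x y : Ω, |η⁻¹ * (V x - V y)| ≤ B) :
    Continuous (denV q η V) ∧ ∀ w, c₁ ≤ denV q η V w ∧ denV q η V w ≤ c₂ := by
  have hc₂pos : 0 < c₂ := by
    have h := hmem _ (hVB ⟨0, by norm_num⟩ ⟨0, by norm_num⟩)
    exact hc₁.trans_le (h.1.trans h.2)
  have hTz : ∀ w : Ω, Continuous fun z : Ω => texp q (η⁻¹ * (V z - V w)) := by
    intro w
    exact hcont.comp_continuous (continuous_const.mul (hV.sub continuous_const))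
      (fun z => Set.mem_Icc.mpr (abs_le.mp (hVB z w)))
  have hTw : ∀ z : Ω, Continuous fun w : Ω => texp q (η⁻¹ * (V z - V w)) := by
    intro z
    exact hcont.comp_continuous (continuous_const.mul (continuous_const.sub hV))
      (fun w => Set.mem_Icc.mpr (abs_le.mp (hVB z w)))
  constructor
  · refine continuous_of_dominated (bound := fun _ => c₂)
      (fun w => (hTz w).aestronglyMeasurable) (fun w => ?_) (integrable_const c₂)
      (Filter.Eventually.of_forall hTw)
    refine Filter.Eventually.of_forall fun z => ?_
    rw [Real.norm_eq_abs, abs_of_nonneg (hc₁.le.trans (hmem _ (hVB z w)).1)]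
    exact (hmem _ (hVB z w)).2
  · intro w
    constructor
    · exact le_int (hTz w) (fun z => (hmem _ (hVB z w)).1)
    · have := integral_mono (μ := (volume : Measure Ω)) (contInt (hTz w))
        (integrable_const c₂) (fun z => (hmem _ (hVB z w)).2)
      simpa [denV] using this

/-- Properties of the density `densV`. -/
lemma dens_package {q η B c₁ c₂ : ℝ} (hq : 0 < q) (hc₁ : 0 < c₁)
    (hmem : ∀ z, |z| ≤ B → c₁ ≤ texp q z ∧ texp q z ≤ c₂)
    (hcont : ContinuousOn (texp q) (Set.Icc (-B) B))
    {V : Ω → ℝ} (hV : Continuous V) (hVB : ∀ x y : Ω, |η⁻¹ * (V x - V y)| ≤ B) :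
    Continuous (densV q η V) ∧ ∀ y, |densV q η V y| ≤ (c₂ / c₁) ^ q := by
  obtain ⟨hdenC, hden⟩ := den_package hc₁ hmem hcont hV hVB
  have hc₂pos : 0 < c₂ := by
    have h := hmem _ (hVB ⟨0, by norm_num⟩ ⟨0, by norm_num⟩)
    exact hc₁.trans_le (h.1.trans h.2)
  have hTz : ∀ w : Ω, Continuous fun z : Ω => texp q (η⁻¹ * (V z - V w)) := by
    intro w
    exact hcont.comp_continuous (continuous_const.mul (hV.sub continuous_const))
      (fun z => Set.mem_Icc.mpr (abs_le.mp (hVB z w)))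
  have hTw : ∀ z : Ω, Continuous fun w : Ω => texp q (η⁻¹ * (V z - V w)) := by
    intro z
    exact hcont.comp_continuous (continuous_const.mul (continuous_const.sub hV))
      (fun w => Set.mem_Icc.mpr (abs_le.mp (hVB z w)))
  have hρ : ∀ y w : Ω, c₁ / c₂ ≤ texp q (η⁻¹ * (V y - V w)) / denV q η V w ∧
      texp q (η⁻¹ * (V y - V w)) / denV q η V w ≤ c₂ / c₁ := by
    intro y w
    constructor
    · exact div_le_div₀ (hc₁.le.trans (hmem _ (hVB y w)).1) (hmem _ (hVB y w)).1
        (hc₁.trans_le (hden w).1) (hden w).2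
    · exact div_le_div₀ hc₂pos.le (hmem _ (hVB y w)).2 hc₁ (hden w).1
  have hρw : ∀ y : Ω, Continuous fun w : Ω =>
      (texp q (η⁻¹ * (V y - V w)) / denV q η V w) ^ q := by
    intro y
    refine Continuous.rpow_const ((hTw y).div hdenC (fun w => ?_)) (fun w => Or.inr hq.le)
    exact (hc₁.trans_le (hden w).1).ne'
  have hρy : ∀ w : Ω, Continuous fun y : Ω =>
      (texp q (η⁻¹ * (V y - V w)) / denV q η V w) ^ q := by
    intro w
    exact Continuous.rpow_const ((hTz w).div_const _) (fun y => Or.inr hq.le)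
  have hbound : ∀ y w : Ω,
      |(texp q (η⁻¹ * (V y - V w)) / denV q η V w) ^ q| ≤ (c₂ / c₁) ^ q := by
    intro y w
    rw [abs_of_nonneg (Real.rpow_nonneg (le_trans (by positivity) (hρ y w).1) _)]
    exact Real.rpow_le_rpow (le_trans (by positivity) (hρ y w).1) (hρ y w).2 hq.le
  constructor
  · refine continuous_of_dominated (bound := fun _ => (c₂ / c₁) ^ q)
      (fun y => (hρw y).aestronglyMeasurable) (fun y => ?_)
      (integrable_const _) (Filter.Eventually.of_forall hρy)
    exact Filter.Eventually.of_forall fun w => by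
      rw [Real.norm_eq_abs]; exact hbound y w
  · intro y
    exact abs_int_le (hρw y) (fun w => hbound y w)

/-- Quantitative stability of `densV` with respect to the payoff function. -/
lemma densV_diff_le {q η B c₁ c₂ K Kp : ℝ} (hq : 0 < q) (hc₁ : 0 < c₁) (hK : 0 ≤ K)
    (hKp0 : 0 ≤ Kp)
    (hmem : ∀ z, |z| ≤ B → c₁ ≤ texp q z ∧ texp q z ≤ c₂)
    (hlip : ∀ z z', |z| ≤ B → |z'| ≤ B → |texp q z - texp q z'| ≤ K * |z - z'|)
    (hcont : ContinuousOn (texp q) (Set.Icc (-B) B))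
    (hKp : ∀ x ∈ Set.Icc (c₁ / c₂) (c₂ / c₁), ∀ y ∈ Set.Icc (c₁ / c₂) (c₂ / c₁),
      |x ^ q - y ^ q| ≤ Kp * |x - y|)
    {V V' : Ω → ℝ} (hV : Continuous V) (hV' : Continuous V')
    (hVB : ∀ x y : Ω, |η⁻¹ * (V x - V y)| ≤ B)
    (hV'B : ∀ x y : Ω, |η⁻¹ * (V' x - V' y)| ≤ B)
    {δ : ℝ} (hδ : ∀ x, |V x - V' x| ≤ δ) (y : Ω) :
    |densV q η V y - densV q η V' y| ≤
      (Kp * ((1 / c₁ + c₂ / (c₁ * c₁)) * (K * |η⁻¹| * 2))) * δ := by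
  have hδ0 : 0 ≤ δ := (abs_nonneg _).trans (hδ ⟨0, by norm_num⟩)
  obtain ⟨hdenC, hden⟩ := den_package hc₁ hmem hcont hV hVB
  obtain ⟨hdenC', hden'⟩ := den_package hc₁ hmem hcont hV' hV'B
  have hc₂pos : 0 < c₂ := by
    have h := hmem _ (hVB ⟨0, by norm_num⟩ ⟨0, by norm_num⟩)
    exact hc₁.trans_le (h.1.trans h.2)
  set D := K * |η⁻¹| * (2 * δ) with hD
  have hD0 : 0 ≤ D := by positivity
  -- pointwise bound on the texp difference
  have hTdiff : ∀ a b : Ω,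
      |texp q (η⁻¹ * (V a - V b)) - texp q (η⁻¹ * (V' a - V' b))| ≤ D := by
    intro a b
    have h1 : |η⁻¹ * (V a - V b) - η⁻¹ * (V' a - V' b)| ≤ |η⁻¹| * (2 * δ) := by
      have : η⁻¹ * (V a - V b) - η⁻¹ * (V' a - V' b)
          = η⁻¹ * ((V a - V' a) - (V b - V' b)) := by ring
      rw [this, abs_mul]
      refine mul_le_mul_of_nonneg_left ?_ (abs_nonneg _)
      calc |(V a - V' a) - (V b - V' b)| ≤ |V a - V' a| + |V b - V' b| := abs_sub _ _
        _ ≤ 2 * δ := by linarith [hδ a, hδ b]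
    calc |texp q (η⁻¹ * (V a - V b)) - texp q (η⁻¹ * (V' a - V' b))|
        ≤ K * |η⁻¹ * (V a - V b) - η⁻¹ * (V' a - V' b)| := hlip _ _ (hVB a b) (hV'B a b)
      _ ≤ K * (|η⁻¹| * (2 * δ)) := mul_le_mul_of_nonneg_left h1 hK
      _ = D := by rw [hD]; ring
  have hTz : ∀ (W : Ω → ℝ), Continuous W → (∀ x y : Ω, |η⁻¹ * (W x - W y)| ≤ B) →
      ∀ w : Ω, Continuous fun z : Ω => texp q (η⁻¹ * (W z - W w)) := by
    intro W hW hWB w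
    exact hcont.comp_continuous (continuous_const.mul (hW.sub continuous_const))
      (fun z => Set.mem_Icc.mpr (abs_le.mp (hWB z w)))
  -- bound on the denominator difference
  have hdendiff : ∀ w : Ω, |denV q η V w - denV q η V' w| ≤ D := by
    intro w
    have hsub : denV q η V w - denV q η V' w
        = ∫ z : Ω, (texp q (η⁻¹ * (V z - V w)) - texp q (η⁻¹ * (V' z - V' w))) := by
      rw [integral_sub (contInt (hTz V hV hVB w)) (contInt (hTz V' hV' hV'B w))]
      rfl
    rw [hsub]
    exact abs_int_le ((hTz V hV hVB w).sub (hTz V' hV' hV'B w)) (fun z => hTdiff z w)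
  -- bound on the ratio difference
  set Dρ := D / c₁ + c₂ * D / (c₁ * c₁) with hDρ
  have hρdiff : ∀ y' w : Ω,
      |texp q (η⁻¹ * (V y' - V w)) / denV q η V w
        - texp q (η⁻¹ * (V' y' - V' w)) / denV q η V' w| ≤ Dρ := by
    intro y' w
    set a := texp q (η⁻¹ * (V y' - V w))
    set a' := texp q (η⁻¹ * (V' y' - V' w))
    set b := denV q η V w
    set b' := denV q η V' w
    have hb : c₁ ≤ b := (hden w).1
    have hb' : c₁ ≤ b' := (hden' w).1
    have hbpos : 0 < b := hc₁.trans_le hb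
    have hbpos' : 0 < b' := hc₁.trans_le hb'
    have ha' : a' ≤ c₂ := (hmem _ (hV'B y' w)).2
    have ha'0 : 0 ≤ a' := hc₁.le.trans (hmem _ (hV'B y' w)).1
    have he : a / b - a' / b' = (a - a') / b + a' * (b' - b) / (b * b') := by
      field_simp
      ring
    rw [he]
    have ht1 : |(a - a') / b| ≤ D / c₁ := by
      rw [abs_div, abs_of_pos hbpos]
      exact div_le_div₀ hD0 (hTdiff y' w) hc₁ hb
    have ht2 : |a' * (b' - b) / (b * b')| ≤ c₂ * D / (c₁ * c₁) := by
      rw [abs_div, abs_mul, abs_of_pos (mul_pos hbpos hbpos'), abs_of_nonneg ha'0]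
      refine div_le_div₀ (by positivity) ?_ (by positivity) ?_
      · have h := hdendiff w
        rw [show |b' - b| = |b - b'| from abs_sub_comm _ _]
        exact mul_le_mul ha' h (abs_nonneg _) hc₂pos.le
      · exact mul_le_mul hb hb' hc₁.le hbpos.le
    calc |(a - a') / b + a' * (b' - b) / (b * b')|
        ≤ |(a - a') / b| + |a' * (b' - b) / (b * b')| := abs_add_le _ _
      _ ≤ D / c₁ + c₂ * D / (c₁ * c₁) := add_le_add ht1 ht2
  -- bound on the q-power of the ratio difference
  have hmemρ : ∀ (W : Ω → ℝ) (hW : Continuous W) (hWB : ∀ x y : Ω, |η⁻¹ * (W x - W y)| ≤ B)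
      (hdenW : ∀ w, c₁ ≤ denV q η W w ∧ denV q η W w ≤ c₂) (y' w : Ω),
      texp q (η⁻¹ * (W y' - W w)) / denV q η W w ∈ Set.Icc (c₁ / c₂) (c₂ / c₁) := by
    intro W hW hWB hdenW y' w
    constructor
    · exact div_le_div₀ (hc₁.le.trans (hmem _ (hWB y' w)).1) (hmem _ (hWB y' w)).1
        (hc₁.trans_le (hdenW w).1) (hdenW w).2
    · exact div_le_div₀ hc₂pos.le (hmem _ (hWB y' w)).2 hc₁ (hdenW w).1
  have hpow : ∀ y' w : Ω,
      |(texp q (η⁻¹ * (V y' - V w)) / denV q η V w) ^ q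
        - (texp q (η⁻¹ * (V' y' - V' w)) / denV q η V' w) ^ q| ≤ Kp * Dρ := by
    intro y' w
    calc |(texp q (η⁻¹ * (V y' - V w)) / denV q η V w) ^ q
          - (texp q (η⁻¹ * (V' y' - V' w)) / denV q η V' w) ^ q|
        ≤ Kp * |texp q (η⁻¹ * (V y' - V w)) / denV q η V w
            - texp q (η⁻¹ * (V' y' - V' w)) / denV q η V' w| :=
          hKp _ (hmemρ V hV hVB hden y' w) _ (hmemρ V' hV' hV'B hden' y' w)
      _ ≤ Kp * Dρ := mul_le_mul_of_nonneg_left (hρdiff y' w) hKp0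
  -- assemble
  have hρwC : ∀ (W : Ω → ℝ) (hW : Continuous W)
      (hWB : ∀ x y : Ω, |η⁻¹ * (W x - W y)| ≤ B) (hdenWC : Continuous (denV q η W))
      (hdenW : ∀ w, c₁ ≤ denV q η W w ∧ denV q η W w ≤ c₂),
      Continuous fun w : Ω => (texp q (η⁻¹ * (W y - W w)) / denV q η W w) ^ q := by
    intro W hW hWB hdenWC hdenW
    have : Continuous fun w : Ω => texp q (η⁻¹ * (W y - W w)) :=
      hcont.comp_continuous (continuous_const.mul (continuous_const.sub hW))
        (fun w => Set.mem_Icc.mpr (abs_le.mp (hWB y w)))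
    exact Continuous.rpow_const (this.div hdenWC (fun w => (hc₁.trans_le (hdenW w).1).ne'))
      (fun w => Or.inr hq.le)
  have hsub : densV q η V y - densV q η V' y
      = ∫ w : Ω, ((texp q (η⁻¹ * (V y - V w)) / denV q η V w) ^ q
          - (texp q (η⁻¹ * (V' y - V' w)) / denV q η V' w) ^ q) := by
    rw [integral_sub (contInt (hρwC V hV hVB hdenC hden))
      (contInt (hρwC V' hV' hV'B hdenC' hden'))]
    rfl
  have hfinal : |densV q η V y - densV q η V' y| ≤ Kp * Dρ := by
    rw [hsub]
    exact abs_int_le ((hρwC V hV hVB hdenC hden).sub (hρwC V' hV' hV'B hdenC' hden'))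
      (fun w => hpow y w)
  calc |densV q η V y - densV q η V' y| ≤ Kp * Dρ := hfinal
    _ = (Kp * ((1 / c₁ + c₂ / (c₁ * c₁)) * (K * |η⁻¹| * 2))) * δ := by
        rw [hDρ, hD]; field_simp

end Aux

set_option maxHeartbeats 1600000

/-- Lemma 3: assume the bounds of Assumption 1 hold for all
arguments in `(M)^I`, together with Assumption 2, and fix masses `m_i > 0` with
`Σ_i m_i = 1`. Then there exists `l̄ > 0` such that for every `i` and all
`{μ}, {ν} ∈ (M)^I`, `‖𝔏̄_i μ − 𝔏̄_i ν‖ ≤ l̄ Σ_j ‖μ_j − ν_j‖`. -/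
theorem logitTrunc_lipschitz (I : ℕ) (q η L d : ℝ) (m : Fin I → ℝ)
    (U : Fin I → Ω → (Fin I → SignedMeasure Ω) → ℝ)
    (hq : 0 < q) (hη : 0 < η) (hL : 0 < L) (hd : d ∈ Set.Ioc (0:ℝ) 1)
    (hm : ∀ i, 0 < m i) (hmsum : ∑ i, m i = 1)
    (hU1 : ∀ (i : Fin I) (x : Ω) (μ : Fin I → SignedMeasure Ω), |U i x μ| ≤ L)
    (hU2 : ∀ (i : Fin I) (x y : Ω) (μ : Fin I → SignedMeasure Ω),
      |U i x μ - U i y μ| ≤ L * |(x : ℝ) - (y : ℝ)| ^ d)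
    (hU3 : ∀ (i : Fin I) (x : Ω) (μ ν : Fin I → SignedMeasure Ω),
      |U i x μ - U i x ν| ≤ L * ∑ j, tv (μ j - ν j))
    (hA2 : q ≠ 1 → ∃ g > 0, 1 - 2 * |1 - q| * η⁻¹ * L ≥ g) :
    ∃ lbar > 0, ∀ (i : Fin I) (μ ν : Fin I → SignedMeasure Ω),
      tv (LogitTrunc I q η m U i μ - LogitTrunc I q η m U i ν) ≤
        lbar * ∑ j, tv (μ j - ν j) := by
  obtain ⟨c₁, c₂, K, hc₁, hc₁₂, hK, hmem, hlip, hcont⟩ := texp_package hq hη hL hA2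
  have hc₂ : (0:ℝ) < c₂ := hc₁.trans_le hc₁₂
  have hr₁ : (0:ℝ) < c₁ / c₂ := by positivity
  obtain ⟨Kp, hKp0, hKp⟩ := rpow_lip (b := c₂ / c₁) hr₁ q
  set Md := (c₂ / c₁) ^ q with hMd
  have hMd0 : 0 ≤ Md := Real.rpow_nonneg (by positivity) q
  set C := Kp * ((1 / c₁ + c₂ / (c₁ * c₁)) * (K * |η⁻¹| * 2)) with hC
  have hC0 : 0 ≤ C := by
    refine mul_nonneg hKp0 (mul_nonneg (by positivity) ?_)
    exact mul_nonneg (mul_nonneg hK (abs_nonneg _)) (by norm_num)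
  set M0 := ∑ j : Fin I, (m j)⁻¹ with hM0def
  have hM0 : ∀ i : Fin I, (m i)⁻¹ ≤ M0 :=
    fun i => Finset.single_le_sum (fun j _ => (inv_nonneg.mpr (hm j).le))
      (Finset.mem_univ i)
  have hM0nn : 0 ≤ M0 := Finset.sum_nonneg fun j _ => inv_nonneg.mpr (hm j).le
  have hlbarpos : 0 < M0 * Md + 2 * C * L + 1 := by
    nlinarith [mul_nonneg hM0nn hMd0, mul_nonneg hC0 hL.le]
  refine ⟨M0 * Md + 2 * C * L + 1, hlbarpos, fun i μ ν => ?_⟩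
  set V : Ω → ℝ := fun x => U i x μ with hVdef
  set V' : Ω → ℝ := fun x => U i x ν with hV'def
  set Sd := ∑ j, tv (μ j - ν j) with hSdef
  have hS0 : 0 ≤ Sd := Finset.sum_nonneg fun j _ => tv_nonneg _
  have hVc : Continuous V := holder_cont hL hd.1 hd.2 (fun x y => hU2 i x y μ)
  have hV'c : Continuous V' := holder_cont hL hd.1 hd.2 (fun x y => hU2 i x y ν)
  have hVB : ∀ x y : Ω, |η⁻¹ * (V x - V y)| ≤ η⁻¹ * (2 * L) := by
    intro x y
    rw [abs_mul, abs_of_pos (inv_pos.mpr hη)]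
    refine mul_le_mul_of_nonneg_left ?_ (inv_pos.mpr hη).le
    calc |V x - V y| ≤ |V x| + |V y| := abs_sub _ _
      _ ≤ 2 * L := by linarith [hU1 i x μ, hU1 i y μ]
  have hV'B : ∀ x y : Ω, |η⁻¹ * (V' x - V' y)| ≤ η⁻¹ * (2 * L) := by
    intro x y
    rw [abs_mul, abs_of_pos (inv_pos.mpr hη)]
    refine mul_le_mul_of_nonneg_left ?_ (inv_pos.mpr hη).le
    calc |V' x - V' y| ≤ |V' x| + |V' y| := abs_sub _ _
      _ ≤ 2 * L := by linarith [hU1 i x ν, hU1 i y ν]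
  have hδ : ∀ x, |V x - V' x| ≤ L * Sd := fun x => hU3 i x μ ν
  obtain ⟨hdensC, hdensB⟩ := dens_package hq hc₁ hmem hcont hVc hVB
  obtain ⟨hdensC', hdensB'⟩ := dens_package hq hc₁ hmem hcont hV'c hV'B
  have hdiff : ∀ y, |densV q η V y - densV q η V' y| ≤ C * (L * Sd) := by
    intro y
    have := densV_diff_le hq hc₁ hK hKp0 hmem hlip hcont hKp hVc hV'c hVB hV'B hδ y
    rwa [← hC] at this
  -- the truncation factors
  set cμ := max (2 - (m i)⁻¹ * tv (μ i)) 0 with hcμdef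
  set cν := max (2 - (m i)⁻¹ * tv (ν i)) 0 with hcνdef
  have hminv : (0:ℝ) ≤ (m i)⁻¹ := inv_nonneg.mpr (hm i).le
  have hcμ0 : 0 ≤ cμ := le_max_right _ _
  have hcν0 : 0 ≤ cν := le_max_right _ _
  have hcν2 : cν ≤ 2 := by
    rw [hcνdef]
    refine max_le ?_ (by norm_num)
    have := mul_nonneg hminv (tv_nonneg (ν i))
    linarith
  have hcdiff : |cμ - cν| ≤ (m i)⁻¹ * tv (μ i - ν i) := by
    calc |cμ - cν| ≤ |(2 - (m i)⁻¹ * tv (μ i)) - (2 - (m i)⁻¹ * tv (ν i))| :=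
        abs_max_sub_max_le_abs _ _ _
      _ = (m i)⁻¹ * |tv (μ i) - tv (ν i)| := by
          rw [show (2 - (m i)⁻¹ * tv (μ i)) - (2 - (m i)⁻¹ * tv (ν i))
              = (m i)⁻¹ * (tv (ν i) - tv (μ i)) by ring, abs_mul, abs_of_nonneg hminv,
            abs_sub_comm]
      _ ≤ (m i)⁻¹ * tv (μ i - ν i) :=
          mul_le_mul_of_nonneg_left (abs_tv_sub_tv_le _ _) hminv
  -- rewrite the truncated operators as a single density
  have hint : Integrable (densV q η V) volume := contInt hdensC
  have hint' : Integrable (densV q η V') volume := contInt hdensC'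
  have hrepr : LogitTrunc I q η m U i μ - LogitTrunc I q η m U i ν
      = (volume : Measure Ω).withDensityᵥ
        (fun yy => cμ * densV q η V yy - cν * densV q η V' yy) := by
    have h1 : LogitTrunc I q η m U i μ
        = (volume : Measure Ω).withDensityᵥ (fun yy => cμ * densV q η V yy) := by
      rw [LogitTrunc, Logit, logitDensity_eq_densV, ← hVdef, ← hcμdef]
      rw [show (fun yy => cμ * densV q η V yy) = cμ • (densV q η V) by
        funext yy; simp [smul_eq_mul]]
      rw [withDensityᵥ_smul]
    have h2 : LogitTrunc I q η m U i ν
        = (volume : Measure Ω).withDensityᵥ (fun yy => cν * densV q η V' yy) := by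
      rw [LogitTrunc, Logit, logitDensity_eq_densV, ← hV'def, ← hcνdef]
      rw [show (fun yy => cν * densV q η V' yy) = cν • (densV q η V') by
        funext yy; simp [smul_eq_mul]]
      rw [withDensityᵥ_smul]
    rw [h1, h2, ← withDensityᵥ_sub (hint.const_mul cμ) (hint'.const_mul cν)]
    rfl
  rw [hrepr]
  have hptw : ∀ yy : Ω, |cμ * densV q η V yy - cν * densV q η V' yy|
      ≤ M0 * Md * Sd + 2 * C * L * Sd := by
    intro yy
    have he : cμ * densV q η V yy - cν * densV q η V' yy
        = (cμ - cν) * densV q η V yy + cν * (densV q η V yy - densV q η V' yy) := by ring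
    have ht : tv (μ i - ν i) ≤ Sd :=
      Finset.single_le_sum (f := fun j => tv (μ j - ν j)) (fun j _ => tv_nonneg _)
        (Finset.mem_univ i)
    have htnn : 0 ≤ tv (μ i - ν i) := tv_nonneg _
    have h1 : |(cμ - cν) * densV q η V yy| ≤ M0 * Md * Sd := by
      rw [abs_mul]
      calc |cμ - cν| * |densV q η V yy| ≤ ((m i)⁻¹ * tv (μ i - ν i)) * Md :=
          mul_le_mul hcdiff (hdensB yy) (abs_nonneg _)
            (mul_nonneg hminv htnn)
        _ ≤ (M0 * Sd) * Md := mul_le_mul_of_nonneg_right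
              (mul_le_mul (hM0 i) ht htnn hM0nn) hMd0
        _ = M0 * Md * Sd := by ring
    have h2 : |cν * (densV q η V yy - densV q η V' yy)| ≤ 2 * C * L * Sd := by
      rw [abs_mul, abs_of_nonneg hcν0]
      have hmm : cν * |densV q η V yy - densV q η V' yy| ≤ 2 * (C * (L * Sd)) :=
        mul_le_mul hcν2 (hdiff yy) (abs_nonneg _) (by norm_num)
      calc cν * |densV q η V yy - densV q η V' yy| ≤ 2 * (C * (L * Sd)) := hmm
        _ = 2 * C * L * Sd := by ring
    calc |cμ * densV q η V yy - cν * densV q η V' yy|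
        ≤ |(cμ - cν) * densV q η V yy| + |cν * (densV q η V yy - densV q η V' yy)| := by
          rw [he]; exact abs_add_le _ _
      _ ≤ M0 * Md * Sd + 2 * C * L * Sd := add_le_add h1 h2
  have hgint : Integrable (fun yy => cμ * densV q η V yy - cν * densV q η V' yy) volume :=
    (hint.const_mul cμ).sub (hint'.const_mul cν)
  calc tv ((volume : Measure Ω).withDensityᵥ
        (fun yy => cμ * densV q η V yy - cν * densV q η V' yy))
      ≤ ∫ yy : Ω, |cμ * densV q η V yy - cν * densV q η V' yy| :=
        tv_withDensityᵥ_le hgint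
    _ ≤ ∫ _yy : Ω, (M0 * Md * Sd + 2 * C * L * Sd) :=
        integral_mono hgint.abs (integrable_const _) hptw
    _ = M0 * Md * Sd + 2 * C * L * Sd := by simp
    _ ≤ (M0 * Md + 2 * C * L + 1) * Sd := by nlinarith

end
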